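/- In the polynomial ring MvPolynomial ι ℝ, define the Berezin–Kirillov (Lie–Poisson) bracket by B P Q = Σ_{i,j,k} (C i j k) • ((X k) * (pderiv i P) * (pderiv j Q)), where X k denotes the k-th polynomial variable and pderiv i the partial derivative with respect to the i-th variable. Then B is antisymmetric, B P Q = −(B Q P), and satisfies the Jacobi identity B P (B Q S) + B Q (B S P) + B S (B P Q) = 0 for all polynomials P, Q, S. -/

import Mathlib

open MvPolynomial


section Aux

variable {ι : Type*} [Fintype ι]

private lemma pd_comm (i j : ι) (p : MvPolynomial ι ℝ) :
    pderiv i (pderiv j p) = pderiv j (pderiv i p) := by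
  classical
  induction p using MvPolynomial.induction_on' with
  | add p q hp hq => simp [map_add, hp, hq]
  | monomial s a =>
    simp only [pderiv_monomial]
    rcases eq_or_ne i j with rfl | h
    · rfl
    · rw [tsub_tsub, tsub_tsub, add_comm]
      rw [Finsupp.tsub_apply, Finsupp.tsub_apply, Finsupp.single_eq_of_ne (Ne.symm h),
        Finsupp.single_eq_of_ne h]
      congr 1
      push_cast [Nat.sub_zero]
      ring

noncomputable def brkt (C : ι → ι → ι → ℝ) (P Q : MvPolynomial ι ℝ) : MvPolynomial ι ℝ :=
  ∑ i, ∑ j, ∑ k, C i j k • (X k * pderiv i P * pderiv j Q)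

lemma brkt_def (C : ι → ι → ι → ℝ) (P Q : MvPolynomial ι ℝ) :
    brkt C P Q = ∑ i, ∑ j, ∑ k, C i j k • (X k * pderiv i P * pderiv j Q) := rfl

lemma brkt_anti (C : ι → ι → ι → ℝ) (hC_anti : ∀ i j k, C i j k = -(C j i k))
    (P Q : MvPolynomial ι ℝ) : brkt C P Q = -(brkt C Q P) := by
  unfold brkt
  rw [Finset.sum_comm, ← Finset.sum_neg_distrib]
  refine Finset.sum_congr rfl fun j _ => ?_
  rw [← Finset.sum_neg_distrib]
  refine Finset.sum_congr rfl fun i _ => ?_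
  rw [← Finset.sum_neg_distrib]
  refine Finset.sum_congr rfl fun k _ => ?_
  rw [hC_anti j i k, neg_smul, neg_neg, mul_right_comm]

lemma pderiv_brkt (C : ι → ι → ι → ℝ) (q : ι) (Q S : MvPolynomial ι ℝ) :
    pderiv q (brkt C Q S) =
      (∑ i, ∑ j, C i j q • (pderiv i Q * pderiv j S))
      + (∑ i, ∑ j, ∑ k, C i j k • (X k * pderiv q (pderiv i Q) * pderiv j S))
      + (∑ i, ∑ j, ∑ k, C i j k • (X k * pderiv i Q * pderiv q (pderiv j S))) := by
  classical
  unfold brkt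
  rw [map_sum]
  simp only [map_sum, Derivation.map_smul, pderiv_mul, pderiv_X, smul_add,
    Finset.sum_add_distrib, Pi.single_apply, ite_mul, one_mul, zero_mul, smul_ite, smul_zero,
    Finset.sum_ite_eq', Finset.mem_univ, if_true, add_mul]

noncomputable def e1 (C : ι → ι → ι → ℝ) (P Q S : MvPolynomial ι ℝ) : MvPolynomial ι ℝ :=
  ∑ p, ∑ q, ∑ r, ∑ i, ∑ j,
    (C p q r * C i j q) • (X r * pderiv p P * (pderiv i Q * pderiv j S))

noncomputable def e2 (C : ι → ι → ι → ℝ) (P Q S : MvPolynomial ι ℝ) : MvPolynomial ι ℝ :=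
  ∑ p, ∑ q, ∑ r, ∑ i, ∑ j, ∑ k,
    (C p q r * C i j k) • (X r * pderiv p P * (X k * pderiv q (pderiv i Q) * pderiv j S))

noncomputable def e3 (C : ι → ι → ι → ℝ) (P Q S : MvPolynomial ι ℝ) : MvPolynomial ι ℝ :=
  ∑ p, ∑ q, ∑ r, ∑ i, ∑ j, ∑ k,
    (C p q r * C i j k) • (X r * pderiv p P * (X k * pderiv i Q * pderiv q (pderiv j S)))

lemma expand (C : ι → ι → ι → ℝ) (P Q S : MvPolynomial ι ℝ) :
    brkt C P (brkt C Q S) = e1 C P Q S + e2 C P Q S + e3 C P Q S := by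
  rw [brkt_def]
  simp only [pderiv_brkt, e1, e2, e3, mul_add, Finset.mul_sum, smul_add, Finset.smul_sum,
    mul_smul_comm, smul_smul, Finset.sum_add_distrib]

/-- e1 with the `q` sum moved innermost and factored into the scalar. -/
lemma e1_reorder (C : ι → ι → ι → ℝ) (P Q S : MvPolynomial ι ℝ) :
    e1 C P Q S = ∑ p, ∑ r, ∑ i, ∑ j,
      (∑ q, C p q r * C i j q) • (X r * pderiv p P * (pderiv i Q * pderiv j S)) := by
  rw [e1]
  refine Finset.sum_congr rfl fun p _ => ?_
  rw [Finset.sum_comm]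
  refine Finset.sum_congr rfl fun r _ => ?_
  rw [Finset.sum_comm]
  refine Finset.sum_congr rfl fun i _ => ?_
  rw [Finset.sum_comm]
  refine Finset.sum_congr rfl fun j _ => ?_
  rw [Finset.sum_smul]

lemma e1_flat (C : ι → ι → ι → ℝ) (P Q S : MvPolynomial ι ℝ) :
    e1 C P Q S = ∑ x : ι × ι × ι × ι,
      (∑ q, C x.1 q x.2.1 * C x.2.2.1 x.2.2.2 q) •
        (X x.2.1 * pderiv x.1 P * (pderiv x.2.2.1 Q * pderiv x.2.2.2 S)) := by
  rw [e1_reorder]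
  simp only [Fintype.sum_prod_type]

lemma e2_flat (C : ι → ι → ι → ℝ) (P Q S : MvPolynomial ι ℝ) :
    e2 C P Q S = ∑ x : ι × ι × ι × ι × ι × ι,
      (C x.1 x.2.1 x.2.2.1 * C x.2.2.2.1 x.2.2.2.2.1 x.2.2.2.2.2) •
        (X x.2.2.1 * pderiv x.1 P *
          (X x.2.2.2.2.2 * pderiv x.2.1 (pderiv x.2.2.2.1 Q) * pderiv x.2.2.2.2.1 S)) := by
  rw [e2]
  simp only [Fintype.sum_prod_type]

lemma e3_flat (C : ι → ι → ι → ℝ) (P Q S : MvPolynomial ι ℝ) :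
    e3 C P Q S = ∑ x : ι × ι × ι × ι × ι × ι,
      (C x.1 x.2.1 x.2.2.1 * C x.2.2.2.1 x.2.2.2.2.1 x.2.2.2.2.2) •
        (X x.2.2.1 * pderiv x.1 P *
          (X x.2.2.2.2.2 * pderiv x.2.2.2.1 Q * pderiv x.2.1 (pderiv x.2.2.2.2.1 S))) := by
  rw [e3]
  simp only [Fintype.sum_prod_type]

lemma e1_cyc (C : ι → ι → ι → ℝ) (hC_anti : ∀ i j k, C i j k = -(C j i k))
    (hC_jac : ∀ i j l m,
      ∑ k, (C i j k * C k l m + C j l k * C k i m + C l i k * C k j m) = 0)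
    (P Q S : MvPolynomial ι ℝ) :
    e1 C P Q S + e1 C Q S P + e1 C S P Q = 0 := by
  have hQSP : e1 C Q S P = ∑ x : ι × ι × ι × ι,
      (∑ q, C x.2.2.1 q x.2.1 * C x.2.2.2 x.1 q) •
        (X x.2.1 * pderiv x.1 P * (pderiv x.2.2.1 Q * pderiv x.2.2.2 S)) := by
    rw [e1_flat]
    refine Fintype.sum_equiv
      ⟨fun x => (x.2.2.2, x.2.1, x.1, x.2.2.1),
       fun x => (x.2.2.1, x.2.1, x.2.2.2, x.1),
       fun ⟨p, r, i, j⟩ => rfl, fun ⟨p, r, i, j⟩ => rfl⟩ _ _ fun ⟨p, r, i, j⟩ => ?_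
    dsimp only [Equiv.coe_fn_mk]
    congr 1
    ring
  have hSPQ : e1 C S P Q = ∑ x : ι × ι × ι × ι,
      (∑ q, C x.2.2.2 q x.2.1 * C x.1 x.2.2.1 q) •
        (X x.2.1 * pderiv x.1 P * (pderiv x.2.2.1 Q * pderiv x.2.2.2 S)) := by
    rw [e1_flat]
    refine Fintype.sum_equiv
      ⟨fun x => (x.2.2.1, x.2.1, x.2.2.2, x.1),
       fun x => (x.2.2.2, x.2.1, x.1, x.2.2.1),
       fun ⟨p, r, i, j⟩ => rfl, fun ⟨p, r, i, j⟩ => rfl⟩ _ _ fun ⟨p, r, i, j⟩ => ?_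
    dsimp only [Equiv.coe_fn_mk]
    congr 1
    ring
  rw [e1_flat, hQSP, hSPQ, ← Finset.sum_add_distrib, ← Finset.sum_add_distrib]
  refine Finset.sum_eq_zero fun x _ => ?_
  obtain ⟨p, r, i, j⟩ := x
  dsimp only
  rw [← add_smul, ← add_smul, ← Finset.sum_add_distrib, ← Finset.sum_add_distrib]
  have hterm : ∀ q, C p q r * C i j q + C i q r * C j p q + C j q r * C p i q =
      -(C i j q * C q p r + C j p q * C q i r + C p i q * C q j r) := fun q => by
    rw [hC_anti p q r, hC_anti i q r, hC_anti j q r]; ring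
  simp only [hterm]
  rw [Finset.sum_neg_distrib, hC_jac i j p r, neg_zero, zero_smul]

private lemma self_cancel {M : Type*} [AddCommGroup M] [Module ℝ M] {a : M} (h : a = -a) :
    a = 0 := by
  have h2 : (2 : ℝ) • a = 0 := by
    rw [two_smul]; nth_rewrite 2 [h]; exact add_neg_cancel a
  rcases smul_eq_zero.mp h2 with h' | h'
  · norm_num at h'
  · exact h'

lemma e23_pair (C : ι → ι → ι → ℝ) (hC_anti : ∀ i j k, C i j k = -(C j i k))
    (P Q S : MvPolynomial ι ℝ) : e2 C P Q S + e3 C S P Q = 0 := by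
  have h3 : e3 C S P Q = ∑ x : ι × ι × ι × ι × ι × ι,
      (C x.2.2.2.2.1 x.2.1 x.2.2.1 * C x.1 x.2.2.2.1 x.2.2.2.2.2) •
        (X x.2.2.1 * pderiv x.1 P *
          (X x.2.2.2.2.2 * pderiv x.2.1 (pderiv x.2.2.2.1 Q) * pderiv x.2.2.2.2.1 S)) := by
    rw [e3_flat]
    refine Fintype.sum_equiv
      ⟨fun x => (x.2.2.2.1, x.2.1, x.2.2.1, x.2.2.2.2.1, x.1, x.2.2.2.2.2),
       fun x => (x.2.2.2.2.1, x.2.1, x.2.2.1, x.1, x.2.2.2.1, x.2.2.2.2.2),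
       fun ⟨a, b, c, d, e, f⟩ => rfl, fun ⟨a, b, c, d, e, f⟩ => rfl⟩ _ _
      fun ⟨a, b, c, d, e, f⟩ => ?_
    dsimp only [Equiv.coe_fn_mk]
    congr 1
    ring
  rw [e2_flat, h3, ← Finset.sum_add_distrib]
  refine self_cancel ?_
  rw [← Finset.sum_neg_distrib]
  refine Fintype.sum_equiv
    ⟨fun x => (x.1, x.2.2.2.1, x.2.2.2.2.2, x.2.1, x.2.2.2.2.1, x.2.2.1),
     fun x => (x.1, x.2.2.2.1, x.2.2.2.2.2, x.2.1, x.2.2.2.2.1, x.2.2.1),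
     fun ⟨p, q, r, i, j, k⟩ => rfl, fun ⟨p, q, r, i, j, k⟩ => rfl⟩ _ _
    fun ⟨p, q, r, i, j, k⟩ => ?_
  dsimp only [Equiv.coe_fn_mk]
  rw [pd_comm i q Q, hC_anti j i k, hC_anti q j r, ← add_smul, ← add_smul, ← neg_smul]
  congr 1
  · ring
  · ring

end Aux

/-- The Berezin–Kirillov (Lie–Poisson) bracket
`B P Q = ∑ i j k, (C i j k) • (X k * pderiv i P * pderiv j Q)` on `MvPolynomial ι ℝ`
is antisymmetric and satisfies the Jacobi identity. -/
theorem stmt_4 {ι : Type*} [Fintype ι] (C : ι → ι → ι → ℝ)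
    (hC_anti : ∀ i j k, C i j k = -(C j i k))
    (hC_jac : ∀ i j l m,
      ∑ k, (C i j k * C k l m + C j l k * C k i m + C l i k * C k j m) = 0)
    (B : MvPolynomial ι ℝ → MvPolynomial ι ℝ → MvPolynomial ι ℝ)
    (hB : ∀ P Q, B P Q =
      ∑ i, ∑ j, ∑ k, C i j k • (MvPolynomial.X k * pderiv i P * pderiv j Q)) :
    (∀ P Q, B P Q = -(B Q P)) ∧
    (∀ P Q S, B P (B Q S) + B Q (B S P) + B S (B P Q) = 0) := by
  have hB' : ∀ P Q, B P Q = brkt C P Q := fun P Q => (hB P Q).trans (brkt_def C P Q).symm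
  constructor
  · intro P Q
    rw [hB', hB']
    exact brkt_anti C hC_anti P Q
  · intro P Q S
    simp only [hB']
    rw [expand C P Q S, expand C Q S P, expand C S P Q]
    have h1 := e1_cyc C hC_anti hC_jac P Q S
    have h2 := e23_pair C hC_anti P Q S
    have h3 := e23_pair C hC_anti Q S P
    have h4 := e23_pair C hC_anti S P Q
    linear_combination h1 + h2 + h3 + h4
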